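/- Let 0 < a < 1 and let F_1 and F_2 be homeomorphisms of [0,1] such that 0, a and 1 are fixed points of both F_1 and F_2, and F_1(t) > t and F_2(t) > t for all t ∈ [0,1] \ {0, a, 1}. Let f_1 and f_2 be the induced homeomorphisms of the circle S¹ = ℝ/ℤ. Then the IFS 𝓕 = {S¹; f_1, f_2} does not have the average shadowing property. -/

import Mathlib

open Filter Finset

/-- Composition along σ: `IFSIter f σ n = f (σ (n-1)) ∘ ⋯ ∘ f (σ 0)`, with `IFSIter f σ 0 = id`. -/
def IFSIter {X : Type*} {Λ : Type*} (f : Λ → X → X) (σ : ℕ → Λ) : ℕ → X → X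
  | 0 => id
  | n + 1 => f (σ n) ∘ IFSIter f σ n

/-- `(x i)` is a δ-average pseudo-orbit of the IFS `f`. -/
def IsAvgPseudoOrbit {X : Type*} [MetricSpace X] {Λ : Type*}
    (f : Λ → X → X) (δ : ℝ) (x : ℕ → X) : Prop :=
  ∃ N : ℕ, ∃ σ : ℕ → Λ, ∀ n : ℕ, N ≤ n →
    (1 / n : ℝ) * ∑ i ∈ Finset.range n, dist (f (σ i) (x i)) (x (i + 1)) < δ

/-- `(x i)` is ε-shadowed in average by the point `z`. -/
def AvgShadowedBy {X : Type*} [MetricSpace X] {Λ : Type*}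
    (f : Λ → X → X) (ε : ℝ) (x : ℕ → X) (z : X) : Prop :=
  ∃ σ : ℕ → Λ,
    Filter.limsup (fun n : ℕ =>
      (1 / n : ℝ) * ∑ i ∈ Finset.range n, dist (IFSIter f σ i z) (x i)) Filter.atTop < ε

/-- The IFS `f` has the average shadowing property. -/
def HasAvgShadowing {X : Type*} [MetricSpace X] {Λ : Type*} (f : Λ → X → X) : Prop :=
  ∀ ε : ℝ, 0 < ε → ∃ δ : ℝ, 0 < δ ∧
    ∀ x : ℕ → X, IsAvgPseudoOrbit f δ x → ∃ z : X, AvgShadowedBy f ε x z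

/-- An ε-chain of the IFS `f` from `x` to `y`. -/
def IsEpsChain {X : Type*} [MetricSpace X] {Λ : Type*}
    (f : Λ → X → X) (ε : ℝ) (x y : X) : Prop :=
  ∃ n : ℕ, 0 < n ∧ ∃ p : ℕ → X, ∃ lam : ℕ → Λ,
    p 0 = x ∧ p n = y ∧ ∀ i < n, dist (f (lam i) (p i)) (p (i + 1)) ≤ ε

/-- `x` is a chain recurrent point of the IFS `f`. -/
def ChainRecurrentPt {X : Type*} [MetricSpace X] {Λ : Type*}
    (f : Λ → X → X) (x : X) : Prop :=
  ∀ ε : ℝ, 0 < ε → IsEpsChain f ε x x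

set_option maxHeartbeats 1000000 in
/-- for homeomorphisms `F 1, F 2` of `[0,1]` fixing `0, a, 1` and with
`F i t > t` elsewhere, the induced IFS on the circle `ℝ/ℤ` does not have the
average shadowing property. -/
theorem circle_not_avgShadowing
    (a : ℝ) (ha0 : 0 < a) (ha1 : a < 1)
    (F : Fin 2 → ℝ → ℝ)
    (hbij : ∀ i : Fin 2, Set.BijOn (F i) (Set.Icc 0 1) (Set.Icc 0 1))
    (hcont : ∀ i : Fin 2, ContinuousOn (F i) (Set.Icc 0 1))
    (hF0 : ∀ i : Fin 2, F i 0 = 0) (hFa : ∀ i : Fin 2, F i a = a)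
    (hF1 : ∀ i : Fin 2, F i 1 = 1)
    (hgt : ∀ i : Fin 2, ∀ t ∈ Set.Icc (0 : ℝ) 1, t ≠ 0 → t ≠ a → t ≠ 1 → t < F i t)
    (f : Fin 2 → AddCircle (1 : ℝ) → AddCircle (1 : ℝ))
    (hfc : ∀ i : Fin 2, Continuous (f i))
    (hind : ∀ i : Fin 2, ∀ t ∈ Set.Ico (0 : ℝ) 1,
      f i ((t : ℝ) : AddCircle (1 : ℝ)) = ((F i t : ℝ) : AddCircle (1 : ℝ))) :
    ¬ HasAvgShadowing f := by
  intro hAS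
  have haI : a ∈ Set.Ico (0:ℝ) 1 := ⟨ha0.le, ha1⟩
  -- every point of the circle has a representative in [0,1)
  have hrep : ∀ z : AddCircle (1:ℝ), ∃ s : ℝ, s ∈ Set.Ico (0:ℝ) 1 ∧
      ((s : ℝ) : AddCircle (1:ℝ)) = z := by
    intro z
    obtain ⟨r, hr⟩ := Quotient.exists_rep z
    refine ⟨Int.fract r, ⟨Int.fract_nonneg r, Int.fract_lt_one r⟩, ?_⟩
    have h : ((Int.fract r - r : ℝ) : AddCircle (1:ℝ)) = 0 := by
      rw [AddCircle.coe_eq_zero_iff]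
      exact ⟨-⌊r⌋, by rw [zsmul_eq_mul, mul_one]; push_cast [Int.fract]; ring⟩
    rw [AddCircle.coe_sub, sub_eq_zero] at h
    exact h.trans hr
  -- the projection is nonexpansive
  have hcoe_le : ∀ s t : ℝ, dist ((s:ℝ) : AddCircle (1:ℝ)) ((t:ℝ) : AddCircle (1:ℝ)) ≤ dist s t := by
    intro s t
    rw [dist_eq_norm, dist_eq_norm, ← AddCircle.coe_sub]
    exact QuotientAddGroup.norm_mk_le_norm
  -- diameter bound
  have hdist1 : ∀ u v : AddCircle (1:ℝ), dist u v ≤ 1 := by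
    intro u v
    obtain ⟨s, hs, rfl⟩ := hrep u
    obtain ⟨t, ht, rfl⟩ := hrep v
    refine le_trans (hcoe_le s t) ?_
    rw [Real.dist_eq, abs_le]
    constructor <;> nlinarith [hs.1, hs.2, ht.1, ht.2]
  have hane : ((a:ℝ) : AddCircle (1:ℝ)) ≠ 0 := by
    intro hcontra
    rw [AddCircle.coe_eq_zero_iff] at hcontra
    obtain ⟨n, hn⟩ := hcontra
    rw [zsmul_eq_mul, mul_one] at hn
    rcases Int.lt_or_le n 1 with h | h
    · have h0 : n ≤ 0 := by omega
      have : (n:ℝ) ≤ 0 := by exact_mod_cast h0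
      linarith
    · have : (1:ℝ) ≤ (n:ℝ) := by exact_mod_cast h
      linarith
  set D := dist (0 : AddCircle (1:ℝ)) ((a:ℝ) : AddCircle (1:ℝ)) with hDdef
  have hD : 0 < D := dist_pos.mpr (Ne.symm hane)
  have hzero : ((0:ℝ) : AddCircle (1:ℝ)) = 0 := by norm_num
  -- fixed points of each f i
  have hf0 : ∀ i : Fin 2, f i (0 : AddCircle (1:ℝ)) = 0 := by
    intro i
    have h := hind i 0 ⟨le_refl 0, one_pos⟩
    rw [hF0 i] at h
    rwa [hzero] at h
  have hfa : ∀ i : Fin 2, f i ((a:ℝ) : AddCircle (1:ℝ)) = ((a:ℝ) : AddCircle (1:ℝ)) := by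
    intro i
    have h := hind i a haI
    rwa [hFa i] at h
  -- every true orbit converges
  have horbit : ∀ (z : AddCircle (1:ℝ)) (σ : ℕ → Fin 2),
      ∃ q : AddCircle (1:ℝ), Filter.Tendsto (fun n => IFSIter f σ n z) Filter.atTop (nhds q) := by
    intro z σ
    obtain ⟨t0, ht0I, ht0⟩ := hrep z
    have hIco : ∀ n, IFSIter F σ n t0 ∈ Set.Ico (0:ℝ) 1 := by
      intro n
      induction n with
      | zero => exact ht0I
      | succ n ih =>
        have hu : IFSIter F σ (n+1) t0 = F (σ n) (IFSIter F σ n t0) := rfl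
        have hmem : F (σ n) (IFSIter F σ n t0) ∈ Set.Icc (0:ℝ) 1 :=
          (hbij (σ n)).mapsTo ⟨ih.1, ih.2.le⟩
        have hne : F (σ n) (IFSIter F σ n t0) ≠ 1 := by
          intro hcontra
          have h1 : F (σ n) (IFSIter F σ n t0) = F (σ n) 1 := by rw [hcontra, hF1]
          have h2 := (hbij (σ n)).injOn ⟨ih.1, ih.2.le⟩
            (Set.mem_Icc.mpr ⟨zero_le_one, le_refl 1⟩) h1
          exact ih.2.ne h2
        rw [hu]
        exact ⟨hmem.1, lt_of_le_of_ne hmem.2 hne⟩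
    have hcirc : ∀ n, IFSIter f σ n z = ((IFSIter F σ n t0 : ℝ) : AddCircle (1:ℝ)) := by
      intro n
      induction n with
      | zero => exact ht0.symm
      | succ n ih =>
        have hL : IFSIter f σ (n+1) z = f (σ n) (IFSIter f σ n z) := rfl
        have hR : IFSIter F σ (n+1) t0 = F (σ n) (IFSIter F σ n t0) := rfl
        rw [hL, ih, hind (σ n) _ (hIco n), hR]
    have hmono : Monotone (fun n => IFSIter F σ n t0) := by
      apply monotone_nat_of_le_succ
      intro n
      have hs := hIco n
      have hR : IFSIter F σ (n+1) t0 = F (σ n) (IFSIter F σ n t0) := rfl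
      simp only [hR]
      by_cases h0 : IFSIter F σ n t0 = 0
      · rw [h0, hF0]
      · by_cases hA : IFSIter F σ n t0 = a
        · rw [hA, hFa]
        · exact (hgt (σ n) _ ⟨hs.1, hs.2.le⟩ h0 hA hs.2.ne).le
    have hbdd : BddAbove (Set.range fun n => IFSIter F σ n t0) := by
      refine ⟨1, ?_⟩
      rintro y ⟨n, rfl⟩
      exact (hIco n).2.le
    have hlim := tendsto_atTop_ciSup hmono hbdd
    refine ⟨((⨆ n, IFSIter F σ n t0 : ℝ) : AddCircle (1:ℝ)), ?_⟩
    have h2 : Filter.Tendsto (fun n => ((IFSIter F σ n t0 : ℝ) : AddCircle (1:ℝ)))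
        Filter.atTop (nhds ((⨆ n, IFSIter F σ n t0 : ℝ) : AddCircle (1:ℝ))) :=
      ((AddCircle.continuous_mk' 1).tendsto _).comp hlim
    exact h2.congr (fun n => (hcirc n).symm)
  -- apply the average shadowing property with ε = D/8
  obtain ⟨δ, hδ, hshad⟩ := hAS (D/8) (by positivity)
  -- block length m
  obtain ⟨m, hm⟩ := exists_nat_gt (D/δ + 1)
  have hm1 : 0 < m := by
    rcases Nat.eq_zero_or_pos m with rfl | h
    · exfalso
      have h1 : 0 < D / δ := div_pos hD hδ
      have h2 : (D/δ + 1 : ℝ) < 0 := by exact_mod_cast hm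
      linarith
    · exact h
  have hmpos : (0:ℝ) < m := by exact_mod_cast hm1
  have hDm : D / m < δ := by
    rw [div_lt_iff₀ hmpos]
    have h1 : D / δ < m := by linarith
    rw [div_lt_iff₀ hδ] at h1
    linarith [h1]
  -- the alternating pseudo-orbit
  set x : ℕ → AddCircle (1:ℝ) :=
    fun i => if (i / m) % 2 = 0 then 0 else ((a:ℝ) : AddCircle (1:ℝ)) with hxdef
  have hx0 : ∀ i, (i / m) % 2 = 0 → x i = 0 := by intro i h; simp [hxdef, h]
  have hx1 : ∀ i, (i / m) % 2 = 1 → x i = ((a:ℝ) : AddCircle (1:ℝ)) := by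
    intro i h; simp [hxdef, h]
  have hxfix : ∀ (j : Fin 2) i, f j (x i) = x i := by
    intro j i
    rcases Nat.mod_two_eq_zero_or_one (i / m) with h | h
    · rw [hx0 i h, hf0]
    · rw [hx1 i h, hfa]
  have hflip : ∀ i, dist (x i) (x (i+m)) = D := by
    intro i
    have hdiv : (i+m)/m = i/m + 1 := Nat.add_div_right i hm1
    rcases Nat.mod_two_eq_zero_or_one (i / m) with h | h
    · have h2 : ((i+m)/m) % 2 = 1 := by rw [hdiv]; omega
      rw [hx0 i h, hx1 (i+m) h2]
    · have h2 : ((i+m)/m) % 2 = 0 := by rw [hdiv]; omega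
      rw [hx1 i h, hx0 (i+m) h2, dist_comm]
  have hxle : ∀ i j, dist (x i) (x j) ≤ D := by
    intro i j
    rcases Nat.mod_two_eq_zero_or_one (i / m) with hi | hi <;>
      rcases Nat.mod_two_eq_zero_or_one (j / m) with hj | hj
    · rw [hx0 i hi, hx0 j hj, dist_self]; exact hD.le
    · rw [hx0 i hi, hx1 j hj]
    · rw [hx1 i hi, hx0 j hj, dist_comm]
    · rw [hx1 i hi, hx1 j hj, dist_self]; exact hD.le
  have hstep : ∀ i, dist (x i) (x (i+1)) ≤ if m ∣ (i+1) then D else 0 := by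
    intro i
    by_cases h : m ∣ (i+1)
    · rw [if_pos h]; exact hxle i (i+1)
    · rw [if_neg h]
      have hdiv : (i+1)/m = i/m := by rw [Nat.succ_div, if_neg h, add_zero]
      have hxx : x (i+1) = x i := by simp only [hxdef, hdiv]
      rw [hxx, dist_self]
  have hcard : ∀ n : ℕ, ((Finset.range n).filter (fun i => m ∣ (i+1))).card = n / m := by
    intro n
    rw [← Nat.Ioc_filter_dvd_card_eq_div n m]
    apply Finset.card_bij (fun i _ => i + 1)
    · intro i hi
      simp only [Finset.mem_filter, Finset.mem_range] at hi
      simp only [Finset.mem_filter, Finset.mem_Ioc]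
      exact ⟨⟨Nat.succ_pos _, hi.1⟩, hi.2⟩
    · intro i _ j _ hij; omega
    · intro b hb
      simp only [Finset.mem_filter, Finset.mem_Ioc] at hb
      refine ⟨b - 1, ?_, by omega⟩
      simp only [Finset.mem_filter, Finset.mem_range]
      refine ⟨by omega, ?_⟩
      have hb1 : b - 1 + 1 = b := by omega
      rw [hb1]; exact hb.2
  -- x is a δ-average pseudo-orbit
  have hpseudo : IsAvgPseudoOrbit f δ x := by
    refine ⟨1, fun _ => 0, ?_⟩
    intro n hn
    have hnpos : (0:ℝ) < n := by exact_mod_cast hn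
    have hn0 : (n:ℝ) ≠ 0 := ne_of_gt hnpos
    have hsum : ∑ i ∈ Finset.range n, dist (f 0 (x i)) (x (i+1)) ≤ D * ((n / m : ℕ) : ℝ) := by
      calc ∑ i ∈ Finset.range n, dist (f 0 (x i)) (x (i+1))
          = ∑ i ∈ Finset.range n, dist (x i) (x (i+1)) := by
            refine Finset.sum_congr rfl fun i _ => ?_
            rw [hxfix 0 i]
        _ ≤ ∑ i ∈ Finset.range n, (if m ∣ (i+1) then D else 0) :=
            Finset.sum_le_sum (fun i _ => hstep i)
        _ = (((Finset.range n).filter (fun i => m ∣ (i+1))).card : ℝ) * D := by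
            rw [Finset.sum_ite, Finset.sum_const, Finset.sum_const_zero, add_zero,
              nsmul_eq_mul]
        _ = D * ((n / m : ℕ) : ℝ) := by first | (rw [hcard n]; ring) | rw [hcard n]
    have hcast : ((n / m : ℕ) : ℝ) ≤ (n : ℝ) / m := Nat.cast_div_le
    calc (1/n : ℝ) * ∑ i ∈ Finset.range n, dist (f 0 (x i)) (x (i+1))
        ≤ (1/n : ℝ) * (D * ((n : ℝ) / m)) := by
          apply mul_le_mul_of_nonneg_left _ (by positivity)
          exact le_trans hsum (mul_le_mul_of_nonneg_left hcast hD.le)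
      _ = D / m := by first | (field_simp; ring) | field_simp
      _ < δ := hDm
  obtain ⟨z, σ, hlimsup⟩ := hshad x hpseudo
  obtain ⟨q, hq⟩ := horbit z σ
  -- the averages are bounded
  have hbound : Filter.IsBoundedUnder (· ≤ ·) Filter.atTop (fun n : ℕ =>
      (1 / n : ℝ) * ∑ i ∈ Finset.range n, dist (IFSIter f σ i z) (x i)) := by
    apply Filter.isBoundedUnder_of
    refine ⟨1, fun n => ?_⟩
    rcases Nat.eq_zero_or_pos n with rfl | hn
    · simp
    · have hnpos : (0:ℝ) < n := by exact_mod_cast hn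
      have hsum : ∑ i ∈ Finset.range n, dist (IFSIter f σ i z) (x i) ≤ (n : ℝ) := by
        calc ∑ i ∈ Finset.range n, dist (IFSIter f σ i z) (x i)
            ≤ ∑ _i ∈ Finset.range n, (1:ℝ) := Finset.sum_le_sum fun i _ => hdist1 _ _
          _ = (n : ℝ) := by simp
      calc (1 / n : ℝ) * ∑ i ∈ Finset.range n, dist (IFSIter f σ i z) (x i)
          ≤ (1/n : ℝ) * n := mul_le_mul_of_nonneg_left hsum (by positivity)
        _ = 1 := by field_simp
  have hev := Filter.eventually_lt_of_limsup_lt hlimsup hbound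
  rw [Filter.eventually_atTop] at hev
  obtain ⟨N1, hN1⟩ := hev
  -- the true orbit is eventually near q
  obtain ⟨N0, hN0⟩ := (Metric.tendsto_atTop.mp hq) (D/16) (by positivity)
  set C0 := ∑ i ∈ Finset.range N0, dist (IFSIter f σ i z) q with hC0def
  have hC0 : 0 ≤ C0 := Finset.sum_nonneg fun i _ => dist_nonneg
  have horbsum : ∀ n, N0 ≤ n →
      ∑ i ∈ Finset.range n, dist (IFSIter f σ i z) q ≤ C0 + (n:ℝ) * (D/16) := by
    intro n hn
    have hsplit : ∑ i ∈ Finset.range n, dist (IFSIter f σ i z) q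
        = C0 + ∑ i ∈ Finset.Ico N0 n, dist (IFSIter f σ i z) q := by
      rw [hC0def]
      exact (Finset.sum_range_add_sum_Ico _ hn).symm
    rw [hsplit]
    have h2 : ∑ i ∈ Finset.Ico N0 n, dist (IFSIter f σ i z) q
        ≤ (Finset.Ico N0 n).card • (D/16) :=
      Finset.sum_le_card_nsmul _ _ _ (fun i hi => (hN0 i (Finset.mem_Ico.mp hi).1).le)
    rw [nsmul_eq_mul] at h2
    have h3 : ((Finset.Ico N0 n).card : ℝ) ≤ (n : ℝ) := by
      rw [Nat.card_Ico]
      exact_mod_cast Nat.sub_le n N0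
    have h4 : ((Finset.Ico N0 n).card : ℝ) * (D/16) ≤ (n:ℝ) * (D/16) :=
      mul_le_mul_of_nonneg_right h3 (by positivity)
    linarith
  -- the pairing lower bound
  have hpairsum : ∀ n, m ≤ n →
      ((n:ℝ) - m) * D ≤ 2 * ∑ i ∈ Finset.range n, dist q (x i) := by
    intro n hmn
    have h1 : ∀ i, D ≤ dist q (x i) + dist q (x (i+m)) := by
      intro i
      calc D = dist (x i) (x (i+m)) := (hflip i).symm
        _ ≤ dist (x i) q + dist q (x (i+m)) := dist_triangle _ _ _
        _ = dist q (x i) + dist q (x (i+m)) := by rw [dist_comm (x i) q]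
    have h2 : ((n - m : ℕ) : ℝ) * D ≤
        ∑ i ∈ Finset.range (n - m), (dist q (x i) + dist q (x (i+m))) := by
      have h := Finset.card_nsmul_le_sum (Finset.range (n-m))
        (fun i => dist q (x i) + dist q (x (i+m))) D (fun i _ => h1 i)
      rwa [Finset.card_range, nsmul_eq_mul] at h
    have h3 : ∑ i ∈ Finset.range (n-m), dist q (x i)
        ≤ ∑ i ∈ Finset.range n, dist q (x i) :=
      Finset.sum_le_sum_of_subset_of_nonneg
        (Finset.range_subset_range.mpr (Nat.sub_le n m)) (fun i _ _ => dist_nonneg)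
    have h4 : ∑ i ∈ Finset.range (n-m), dist q (x (i+m))
        ≤ ∑ i ∈ Finset.range n, dist q (x i) := by
      have he : ∑ i ∈ Finset.Ico m n, dist q (x i)
          = ∑ i ∈ Finset.range (n - m), dist q (x (m + i)) := by
        rw [Finset.sum_Ico_eq_sum_range]
      have he2 : ∑ i ∈ Finset.range (n-m), dist q (x (i+m))
          = ∑ i ∈ Finset.Ico m n, dist q (x i) := by
        rw [he]
        exact Finset.sum_congr rfl fun i _ => by rw [add_comm]
      rw [he2]
      apply Finset.sum_le_sum_of_subset_of_nonneg
      · rw [Finset.range_eq_Ico]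
        exact Finset.Ico_subset_Ico (Nat.zero_le m) le_rfl
      · intro i _ _; exact dist_nonneg
    rw [Finset.sum_add_distrib] at h2
    have hc : ((n - m : ℕ) : ℝ) = (n:ℝ) - m := by
      rw [Nat.cast_sub hmn]
    rw [hc] at h2
    linarith
  -- triangle inequality for sums
  have htri : ∀ n, ∑ i ∈ Finset.range n, dist q (x i) ≤
      (∑ i ∈ Finset.range n, dist (IFSIter f σ i z) q)
        + ∑ i ∈ Finset.range n, dist (IFSIter f σ i z) (x i) := by
    intro n
    rw [← Finset.sum_add_distrib]
    refine Finset.sum_le_sum fun i _ => ?_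
    calc dist q (x i) ≤ dist q (IFSIter f σ i z) + dist (IFSIter f σ i z) (x i) :=
          dist_triangle _ _ _
      _ = dist (IFSIter f σ i z) q + dist (IFSIter f σ i z) (x i) := by
          rw [dist_comm q]
  -- choose a large n and derive the contradiction
  obtain ⟨n2, hn2⟩ := exists_nat_gt (((m:ℝ) * D / 2 + C0) * 16 / D)
  set n := N1 + N0 + m + n2 + 1 with hndef
  have hnN1 : N1 ≤ n := by omega
  have hnN0 : N0 ≤ n := by omega
  have hnm : m ≤ n := by omega
  have hnn2 : n2 ≤ n := by omega
  have hn1 : 1 ≤ n := by omega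
  have hnpos : (0:ℝ) < n := by exact_mod_cast hn1
  have hS := hN1 n hnN1
  have hSlt : ∑ i ∈ Finset.range n, dist (IFSIter f σ i z) (x i) < (n:ℝ) * (D/8) := by
    have h := hS
    rw [one_div, inv_mul_eq_div, div_lt_iff₀ hnpos] at h
    linarith
  have hO := horbsum n hnN0
  have hQ := hpairsum n hnm
  have hT := htri n
  have hE : ((m:ℝ) * D / 2 + C0) * 16 < (n:ℝ) * D := by
    have hc : (n2:ℝ) ≤ (n:ℝ) := by exact_mod_cast hnn2
    rw [div_lt_iff₀ hD] at hn2
    have hc2 : (n2:ℝ) * D ≤ (n:ℝ) * D := mul_le_mul_of_nonneg_right hc hD.le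
    linarith
  have hmD : (0:ℝ) ≤ (m:ℝ) * D := by positivity
  have e1 : ((n:ℝ) - m) * D = (n:ℝ)*D - (m:ℝ)*D := by ring
  have e2 : (n:ℝ) * (D/8) = ((n:ℝ)*D)/8 := by ring
  have e3 : (n:ℝ) * (D/16) = ((n:ℝ)*D)/16 := by ring
  have e4 : ((m:ℝ) * D / 2 + C0) * 16 = 8*((m:ℝ)*D) + 16*C0 := by ring
  linarith [hQ, hT, hO, hSlt, hE, hC0, hmD, e1, e2, e3, e4]
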